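/- Let H = ℓ²(ℕ) with standard orthonormal basis (e_n)_{n∈ℕ}, let S ∈ B(H) be the right shift (S e_n = e_{n+1}), let Θ : B(H) → B(H) be the map sending an operator to its diagonal part (i.e. ⟨e_i, Θ(A) e_j⟩ = δ_{ij} ⟨e_i, A e_i⟩ for all i,j), and let Φ(A) = S A S*. Then Θ is a unital CP map, Φ is a normal *-endomorphism, Θ ∘ Φ = Φ ∘ Θ, but Θ and Φ do not commute strongly. -/

import Mathlib

/- STATEMENT 10: on `H = ℓ²(ℕ)`, with `Sh` the right shift and `Θ` the map sending an
operator to its diagonal part, and `Φ(A) = Sh A Sh*`: `Θ` is a unital CP map, `Φ` is a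
normal *-endomorphism, `Θ ∘ Φ = Φ ∘ Θ`, but `Θ` and `Φ` do NOT commute strongly. -/

open scoped InnerProductSpace ComplexOrder

universe u

/-- `StronglyCommuteOn M Θ Φ` says that the maps `Θ` and `Φ` (defined at least on the
von Neumann algebra `M ⊆ B(H)`) commute strongly: there is a unitary
`u : M ⊗_Φ M ⊗_Θ H → M ⊗_Θ M ⊗_Φ H` satisfying conditions (i)–(iii).
The Hilbert space `M ⊗_Φ M ⊗_Θ H` (the Hausdorff completion of the algebraic tensor product
with respect to the semi-inner product
`⟨a ⊗ b ⊗ h, c ⊗ d ⊗ k⟩ = ⟨h, Θ(b* Φ(a* c) d) k⟩`) is axiomatized as a Hilbert space `W₁`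
together with a map `ι₁ : M × M × H → W₁` whose range spans a dense subspace and which
realizes the prescribed inner products; similarly for `W₂ = M ⊗_Θ M ⊗_Φ H`.  The operators
`c ⊗ I ⊗ I` (for `c ∈ M`) and `I ⊗ I ⊗ d` (for `d ∈ M′ = Set.centralizer M`) on
`M ⊗_Θ M ⊗_Φ H` are the unique bounded operators `L c` and `Rop d` acting in the natural
way on simple tensors. -/
def StronglyCommuteOn {H : Type u} [NormedAddCommGroup H] [InnerProductSpace ℂ H]
    [CompleteSpace H]
    (M : Set (H →L[ℂ] H)) (Θ Φ : (H →L[ℂ] H) → (H →L[ℂ] H)) : Prop :=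
  ∃ (W₁ : Type u) (_ : NormedAddCommGroup W₁) (_ : InnerProductSpace ℂ W₁) (_ : CompleteSpace W₁)
    (W₂ : Type u) (_ : NormedAddCommGroup W₂) (_ : InnerProductSpace ℂ W₂) (_ : CompleteSpace W₂)
    (ι₁ : (H →L[ℂ] H) → (H →L[ℂ] H) → H → W₁)
    (ι₂ : (H →L[ℂ] H) → (H →L[ℂ] H) → H → W₂)
    (u : W₁ ≃ₗᵢ[ℂ] W₂)
    (L : (H →L[ℂ] H) → (W₂ →L[ℂ] W₂))
    (Rop : (H →L[ℂ] H) → (W₂ →L[ℂ] W₂)),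
    (∀ a ∈ M, ∀ b ∈ M, ∀ c ∈ M, ∀ d ∈ M, ∀ (h k : H),
        ⟪ι₁ a b h, ι₁ c d k⟫_ℂ = ⟪h, (Θ (star b * Φ (star a * c) * d)) k⟫_ℂ) ∧
    (∀ a ∈ M, ∀ b ∈ M, ∀ c ∈ M, ∀ d ∈ M, ∀ (h k : H),
        ⟪ι₂ a b h, ι₂ c d k⟫_ℂ = ⟪h, (Φ (star b * Θ (star a * c) * d)) k⟫_ℂ) ∧
    Dense (Submodule.span ℂ {w : W₁ | ∃ a ∈ M, ∃ b ∈ M, ∃ h : H, w = ι₁ a b h} : Set W₁) ∧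
    Dense (Submodule.span ℂ {w : W₂ | ∃ a ∈ M, ∃ b ∈ M, ∃ h : H, w = ι₂ a b h} : Set W₂) ∧
    (∀ a ∈ M, ∀ h : H, u (ι₁ a 1 h) = ι₂ a 1 h) ∧
    (∀ c ∈ M, ∀ a ∈ M, ∀ b ∈ M, ∀ h : H, L c (ι₂ a b h) = ι₂ (c * a) b h) ∧
    (∀ c ∈ M, ∀ a ∈ M, ∀ b ∈ M, ∀ h : H, u (ι₁ (c * a) b h) = L c (u (ι₁ a b h))) ∧
    (∀ d ∈ Set.centralizer M, ∀ a ∈ M, ∀ b ∈ M, ∀ h : H, Rop d (ι₂ a b h) = ι₂ a b (d h)) ∧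
    (∀ d ∈ Set.centralizer M, ∀ a ∈ M, ∀ b ∈ M, ∀ h : H, u (ι₁ a b (d h)) = Rop d (u (ι₁ a b h)))

/-- The map `α` on `B(H)` is normal: the composition of every normal functional with `α`
is again a normal functional. -/
def IsNormalMap {H : Type u} [NormedAddCommGroup H] [InnerProductSpace ℂ H] [CompleteSpace H]
    (α : (H →L[ℂ] H) → (H →L[ℂ] H)) : Prop :=
  ∀ h g : ℕ → H, Summable (fun n => ‖h n‖ * ‖g n‖) →
    ∃ h' g' : ℕ → H, Summable (fun n => ‖h' n‖ * ‖g' n‖) ∧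
      ∀ a : H →L[ℂ] H, ∑' n, ⟪h n, (α a) (g n)⟫_ℂ = ∑' n, ⟪h' n, a (g' n)⟫_ℂ

/-- The map `θ` is completely positive: for every `n`, every `a₁, …, aₙ` and every
`v₁, …, vₙ ∈ H` one has `∑ᵢⱼ ⟪vᵢ, θ(aᵢ* aⱼ) vⱼ⟫ ≥ 0` (this is the standard equivalent form of
positivity of the induced maps on all matrix levels). -/
def IsCompletelyPositive {H : Type u} [NormedAddCommGroup H] [InnerProductSpace ℂ H]
    [CompleteSpace H] (θ : (H →L[ℂ] H) → (H →L[ℂ] H)) : Prop :=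
  ∀ (n : ℕ) (a : Fin n → (H →L[ℂ] H)) (v : Fin n → H),
    0 ≤ ∑ i, ∑ j, ⟪v i, (θ (star (a i) * a j)) (v j)⟫_ℂ

local notation "H₂" => lp (fun _ : ℕ => ℂ) 2

section DiagAuxSection

noncomputable section DiagAux

namespace DiagAux

def ee (n : ℕ) : H₂ := lp.single 2 n (1 : ℂ)

lemma inner_ee_left (i : ℕ) (f : H₂) : ⟪ee i, f⟫_ℂ = f i := by
  rw [ee, lp.inner_single_left]
  simp [RCLike.inner_apply]

lemma ee_apply (i j : ℕ) : (ee i : ∀ _ : ℕ, ℂ) j = if j = i then 1 else 0 := by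
  rw [ee, lp.single_apply]
  split_ifs with h <;> simp [h]

lemma inner_ee_ee (i j : ℕ) : ⟪ee i, ee j⟫_ℂ = if i = j then 1 else 0 := by
  rw [inner_ee_left, ee_apply]

lemma norm_ee (i : ℕ) : ‖ee i‖ = 1 := by
  have h : ⟪ee i, ee i⟫_ℂ = ((‖ee i‖ : ℂ)) ^ 2 := inner_self_eq_norm_sq_to_K _
  rw [inner_ee_ee] at h
  simp only [if_pos rfl] at h
  have h2 : (‖ee i‖ : ℂ) ^ 2 = 1 := h.symm
  have h3 : (‖ee i‖ : ℝ) ^ 2 = 1 := by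
    exact_mod_cast h2
  nlinarith [norm_nonneg (ee i)]

lemma inner_self_complex (z : ℂ) : ⟪z, z⟫_ℂ = ((‖z‖ ^ 2 : ℝ) : ℂ) := by
  rw [RCLike.inner_apply, Complex.mul_conj']
  push_cast
  ring

lemma coord_eq {f g : H₂} (h : ∀ i, (f : ∀ _ : ℕ, ℂ) i = g i) : f = g :=
  lp.ext (funext h)

lemma single_eq_smul_ee (i : ℕ) (c : ℂ) : (lp.single 2 i c : H₂) = c • ee i := by
  rw [ee, ← lp.single_smul]
  norm_num

/-- Every `f : H₂` is the sum of its coordinates times basis vectors. -/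
lemma hasSum_coord (f : H₂) : HasSum (fun i => (f : ∀ _ : ℕ, ℂ) i • ee i) f := by
  have := lp.hasSum_single (E := fun _ : ℕ => ℂ) ENNReal.ofNat_ne_top f
  convert this using 2 with i
  rw [single_eq_smul_ee]

/-- Continuous linear maps agreeing on all `ee j` agree. -/
lemma clm_ext_ee {A B : H₂ →L[ℂ] H₂} (h : ∀ j, A (ee j) = B (ee j)) : A = B := by
  ext f : 1
  have hs := hasSum_coord f
  have hA : HasSum (fun i => A ((f : ∀ _ : ℕ, ℂ) i • ee i)) (A f) := hs.mapL A
  have hB : HasSum (fun i => B ((f : ∀ _ : ℕ, ℂ) i • ee i)) (B f) := hs.mapL B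
  refine hA.unique ?_
  convert hB using 2 with i
  simp [h i]

lemma clm_ext_entries {A B : H₂ →L[ℂ] H₂}
    (h : ∀ i j, ⟪ee i, A (ee j)⟫_ℂ = ⟪ee i, B (ee j)⟫_ℂ) : A = B := by
  refine clm_ext_ee fun j => coord_eq fun i => ?_
  rw [← inner_ee_left, ← inner_ee_left]
  exact h i j

/-- `‖x‖ ^ 2` as a sum of coordinate square norms. -/
lemma summable_norm_sq (x : H₂) : Summable (fun i => ‖(x : ∀ _ : ℕ, ℂ) i‖ ^ 2) := by
  have h := lp.summable_inner (𝕜 := ℂ) x x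
  have h2 : (fun i => ⟪(x : ∀ _ : ℕ, ℂ) i, x i⟫_ℂ) = fun i => ((‖(x : ∀ _ : ℕ, ℂ) i‖ ^ 2 : ℝ) : ℂ) := by
    funext i
    exact inner_self_complex _
  rw [h2] at h
  exact Complex.summable_ofReal.mp h

lemma norm_sq_eq_tsum (x : H₂) : ‖x‖ ^ 2 = ∑' i, ‖(x : ∀ _ : ℕ, ℂ) i‖ ^ 2 := by
  have h1 : ⟪x, x⟫_ℂ = ((‖x‖ : ℂ)) ^ 2 := inner_self_eq_norm_sq_to_K _
  have h2 : ⟪x, x⟫_ℂ = ∑' i, ⟪(x : ∀ _ : ℕ, ℂ) i, x i⟫_ℂ := lp.inner_eq_tsum x x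
  have h3 : ∑' i, ⟪(x : ∀ _ : ℕ, ℂ) i, x i⟫_ℂ = ((∑' i, ‖(x : ∀ _ : ℕ, ℂ) i‖ ^ 2 : ℝ) : ℂ) := by
    rw [Complex.ofReal_tsum]
    congr 1
    funext i
    exact inner_self_complex _
  have := h1.symm.trans (h2.trans h3)
  exact_mod_cast this

/-- Cauchy–Schwarz for coordinates. -/
lemma tsum_abs_coord_le (x y : H₂) :
    Summable (fun i => ‖(x : ∀ _ : ℕ, ℂ) i‖ * ‖(y : ∀ _ : ℕ, ℂ) i‖) ∧
      ∑' i, ‖(x : ∀ _ : ℕ, ℂ) i‖ * ‖(y : ∀ _ : ℕ, ℂ) i‖ ≤ ‖x‖ * ‖y‖ := by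
  have hb : ∀ s : Finset ℕ, ∑ i ∈ s, ‖(x : ∀ _ : ℕ, ℂ) i‖ * ‖(y : ∀ _ : ℕ, ℂ) i‖ ≤ ‖x‖ * ‖y‖ := by
    intro s
    have hcs := Finset.sum_mul_sq_le_sq_mul_sq s (fun i => ‖(x : ∀ _ : ℕ, ℂ) i‖)
      (fun i => ‖(y : ∀ _ : ℕ, ℂ) i‖)
    have hx : ∑ i ∈ s, ‖(x : ∀ _ : ℕ, ℂ) i‖ ^ 2 ≤ ‖x‖ ^ 2 := by
      rw [norm_sq_eq_tsum x]
      exact Summable.sum_le_tsum s (fun i _ => by positivity) (summable_norm_sq x)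
    have hy : ∑ i ∈ s, ‖(y : ∀ _ : ℕ, ℂ) i‖ ^ 2 ≤ ‖y‖ ^ 2 := by
      rw [norm_sq_eq_tsum y]
      exact Summable.sum_le_tsum s (fun i _ => by positivity) (summable_norm_sq y)
    have h1 : (∑ i ∈ s, ‖(x : ∀ _ : ℕ, ℂ) i‖ * ‖(y : ∀ _ : ℕ, ℂ) i‖) ^ 2 ≤ (‖x‖ * ‖y‖) ^ 2 := by
      calc (∑ i ∈ s, ‖(x : ∀ _ : ℕ, ℂ) i‖ * ‖(y : ∀ _ : ℕ, ℂ) i‖) ^ 2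
          ≤ (∑ i ∈ s, ‖(x : ∀ _ : ℕ, ℂ) i‖ ^ 2) * (∑ i ∈ s, ‖(y : ∀ _ : ℕ, ℂ) i‖ ^ 2) := hcs
        _ ≤ ‖x‖ ^ 2 * ‖y‖ ^ 2 := by
            apply mul_le_mul hx hy (Finset.sum_nonneg fun i _ => by positivity) (by positivity)
        _ = (‖x‖ * ‖y‖) ^ 2 := by ring
    have hsn : 0 ≤ ∑ i ∈ s, ‖(x : ∀ _ : ℕ, ℂ) i‖ * ‖(y : ∀ _ : ℕ, ℂ) i‖ :=
      Finset.sum_nonneg fun i _ => by positivity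
    nlinarith [mul_nonneg (norm_nonneg x) (norm_nonneg y)]
  have hsummable : Summable (fun i => ‖(x : ∀ _ : ℕ, ℂ) i‖ * ‖(y : ∀ _ : ℕ, ℂ) i‖) :=
    summable_of_sum_le (fun i => by positivity) hb
  exact ⟨hsummable, Summable.tsum_le_of_sum_le hsummable hb⟩

end DiagAux

namespace DiagAux

variable {Θ : (H₂ →L[ℂ] H₂) →ₗ[ℂ] (H₂ →L[ℂ] H₂)}

lemma theta_coord
    (hΘ : ∀ (A : H₂ →L[ℂ] H₂) (i j : ℕ),
      ⟪ee i, (Θ A) (ee j)⟫_ℂ = if i = j then ⟪ee i, A (ee i)⟫_ℂ else 0)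
    (A : H₂ →L[ℂ] H₂) (g : H₂) (i : ℕ) :
    ((Θ A) g : ∀ _ : ℕ, ℂ) i = ⟪ee i, A (ee i)⟫_ℂ * (g : ∀ _ : ℕ, ℂ) i := by
  rw [← inner_ee_left]
  have hs := (hasSum_coord g).mapL ((innerSL ℂ (ee i)).comp ((Θ A) : H₂ →L[ℂ] H₂))
  have heq : (fun j => ((innerSL ℂ (ee i)).comp ((Θ A) : H₂ →L[ℂ] H₂)) ((g : ∀ _ : ℕ, ℂ) j • ee j))
      = fun j => if j = i then ⟪ee i, A (ee i)⟫_ℂ * (g : ∀ _ : ℕ, ℂ) i else 0 := by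
    funext j
    simp only [ContinuousLinearMap.comp_apply, map_smul, innerSL_apply_apply, inner_smul_right]
    rw [hΘ A i j]
    by_cases h : j = i
    · subst h; simp [smul_eq_mul, mul_comm]
    · simp [h, Ne.symm h]
  rw [heq] at hs
  exact (hs.unique (hasSum_ite_eq i _)).symm ▸ rfl
lemma inner_theta
    (hΘ : ∀ (A : H₂ →L[ℂ] H₂) (i j : ℕ),
      ⟪ee i, (Θ A) (ee j)⟫_ℂ = if i = j then ⟪ee i, A (ee i)⟫_ℂ else 0)
    (A : H₂ →L[ℂ] H₂) (h g : H₂) :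
    ⟪h, (Θ A) g⟫_ℂ
      = ∑' i, (starRingEnd ℂ) ((h : ∀ _ : ℕ, ℂ) i) * (⟪ee i, A (ee i)⟫_ℂ * (g : ∀ _ : ℕ, ℂ) i) := by
  rw [lp.inner_eq_tsum (𝕜 := ℂ) h ((Θ A) g)]
  congr 1
  funext i
  rw [RCLike.inner_apply, theta_coord hΘ, mul_comm]

lemma norm_diag_le (A : H₂ →L[ℂ] H₂) (i : ℕ) : ‖⟪ee i, A (ee i)⟫_ℂ‖ ≤ ‖A‖ := by
  calc ‖⟪ee i, A (ee i)⟫_ℂ‖ ≤ ‖ee i‖ * ‖A (ee i)‖ := norm_inner_le_norm _ _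
    _ ≤ 1 * (‖A‖ * 1) := by
        rw [norm_ee]
        have := A.le_opNorm (ee i)
        rw [norm_ee] at this
        linarith
    _ = ‖A‖ := by ring

lemma theta_norm_le
    (hΘ : ∀ (A : H₂ →L[ℂ] H₂) (i j : ℕ),
      ⟪ee i, (Θ A) (ee j)⟫_ℂ = if i = j then ⟪ee i, A (ee i)⟫_ℂ else 0)
    (A : H₂ →L[ℂ] H₂) : ‖Θ A‖ ≤ ‖A‖ := by
  refine ContinuousLinearMap.opNorm_le_bound _ (norm_nonneg A) fun g => ?_
  have hterm : ∀ i, ‖(((Θ A) g : H₂) : ∀ _ : ℕ, ℂ) i‖ ^ 2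
      ≤ ‖A‖ ^ 2 * ‖(g : ∀ _ : ℕ, ℂ) i‖ ^ 2 := by
    intro i
    rw [theta_coord hΘ, norm_mul, mul_pow]
    have h1 := norm_diag_le A i
    have h3 : ‖⟪ee i, A (ee i)⟫_ℂ‖ ^ 2 ≤ ‖A‖ ^ 2 := by
      nlinarith [norm_nonneg (⟪ee i, A (ee i)⟫_ℂ)]
    exact mul_le_mul_of_nonneg_right h3 (by positivity)
  have hsum : Summable (fun i => ‖A‖ ^ 2 * ‖(g : ∀ _ : ℕ, ℂ) i‖ ^ 2) :=
    (summable_norm_sq g).mul_left _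
  have h1 : ‖(Θ A) g‖ ^ 2 ≤ (‖A‖ * ‖g‖) ^ 2 := by
    rw [norm_sq_eq_tsum]
    calc ∑' i, ‖(((Θ A) g : H₂) : ∀ _ : ℕ, ℂ) i‖ ^ 2
        ≤ ∑' i, ‖A‖ ^ 2 * ‖(g : ∀ _ : ℕ, ℂ) i‖ ^ 2 :=
          Summable.tsum_le_tsum hterm
            (Summable.of_nonneg_of_le (fun i => by positivity) hterm hsum) hsum
      _ = ‖A‖ ^ 2 * ∑' i, ‖(g : ∀ _ : ℕ, ℂ) i‖ ^ 2 := tsum_mul_left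
      _ = ‖A‖ ^ 2 * ‖g‖ ^ 2 := by rw [← norm_sq_eq_tsum]
      _ = (‖A‖ * ‖g‖) ^ 2 := by ring
  nlinarith [norm_nonneg ((Θ A) g), mul_nonneg (norm_nonneg A) (norm_nonneg g)]

lemma theta_one
    (hΘ : ∀ (A : H₂ →L[ℂ] H₂) (i j : ℕ),
      ⟪ee i, (Θ A) (ee j)⟫_ℂ = if i = j then ⟪ee i, A (ee i)⟫_ℂ else 0) :
    Θ 1 = 1 := by
  refine clm_ext_entries fun i j => ?_
  rw [hΘ 1 i j, ContinuousLinearMap.one_apply, ContinuousLinearMap.one_apply, inner_ee_ee,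
    inner_ee_ee]
  simp
lemma inner_self_nonneg' (w : H₂) : 0 ≤ ⟪w, w⟫_ℂ := by
  rw [inner_self_eq_norm_sq_to_K]
  have h0 : (0:ℂ) ≤ (‖w‖ : ℂ) := by
    exact_mod_cast norm_nonneg w
  exact pow_nonneg h0 2

lemma theta_cp
    (hΘ : ∀ (A : H₂ →L[ℂ] H₂) (i j : ℕ),
      ⟪ee i, (Θ A) (ee j)⟫_ℂ = if i = j then ⟪ee i, A (ee i)⟫_ℂ else 0)
    (n : ℕ) (a : Fin n → (H₂ →L[ℂ] H₂)) (v : Fin n → H₂) :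
    0 ≤ ∑ i, ∑ j, ⟪v i, (Θ (star (a i) * a j)) (v j)⟫_ℂ := by
  classical
  set F : Fin n → Fin n → ℕ → ℂ := fun i j k =>
    (starRingEnd ℂ) ((v i : ∀ _ : ℕ, ℂ) k) *
      (⟪ee k, (star (a i) * a j) (ee k)⟫_ℂ * (v j : ∀ _ : ℕ, ℂ) k) with hF
  have hFsummable : ∀ i j, Summable (F i j) := by
    intro i j
    refine Summable.of_norm_bounded (g := fun k => ‖star (a i) * a j‖ * (‖(v i : ∀ _ : ℕ, ℂ) k‖ * ‖(v j : ∀ _ : ℕ, ℂ) k‖))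
      (((tsum_abs_coord_le (v i) (v j)).1).mul_left _) fun k => ?_
    rw [hF]
    simp only [norm_mul, RCLike.norm_conj]
    have h1 := norm_diag_le (star (a i) * a j) k
    calc ‖(v i : ∀ _ : ℕ, ℂ) k‖ * (‖⟪ee k, (star (a i) * a j) (ee k)⟫_ℂ‖ * ‖(v j : ∀ _ : ℕ, ℂ) k‖)
        = ‖⟪ee k, (star (a i) * a j) (ee k)⟫_ℂ‖ * (‖(v i : ∀ _ : ℕ, ℂ) k‖ * ‖(v j : ∀ _ : ℕ, ℂ) k‖) := by
          ring
      _ ≤ ‖star (a i) * a j‖ * (‖(v i : ∀ _ : ℕ, ℂ) k‖ * ‖(v j : ∀ _ : ℕ, ℂ) k‖) :=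
          mul_le_mul_of_nonneg_right h1 (by positivity)
  have hstep : ∀ i j, ⟪v i, (Θ (star (a i) * a j)) (v j)⟫_ℂ = ∑' k, F i j k := by
    intro i j
    exact inner_theta hΘ _ _ _
  calc (0:ℂ) ≤ ∑' k, ∑ i, ∑ j, F i j k := by
        refine tsum_nonneg fun k => ?_
        have hw : ∑ i, ∑ j, F i j k
            = ⟪∑ i, ((v i : ∀ _ : ℕ, ℂ) k) • (a i (ee k)),
               ∑ j, ((v j : ∀ _ : ℕ, ℂ) k) • (a j (ee k))⟫_ℂ := by
          rw [sum_inner]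
          refine Finset.sum_congr rfl fun i _ => ?_
          rw [inner_sum]
          refine Finset.sum_congr rfl fun j _ => ?_
          have hd : ⟪ee k, (star (a i) * a j) (ee k)⟫_ℂ = ⟪a i (ee k), a j (ee k)⟫_ℂ := by
            rw [ContinuousLinearMap.mul_apply, ContinuousLinearMap.star_eq_adjoint,
              ContinuousLinearMap.adjoint_inner_right]
          simp only [hF, inner_smul_left, inner_smul_right]
          rw [hd]
          ring
        rw [hw]
        exact inner_self_nonneg' _
    _ = ∑ i, ∑ j, ∑' k, F i j k := by
        rw [Summable.tsum_finsetSum (fun i _ => ?_)]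
        · refine Finset.sum_congr rfl fun i _ => ?_
          exact Summable.tsum_finsetSum fun j _ => hFsummable i j
        · exact summable_sum fun j _ => hFsummable i j
    _ = ∑ i, ∑ j, ⟪v i, (Θ (star (a i) * a j)) (v j)⟫_ℂ := by
        refine Finset.sum_congr rfl fun i _ => Finset.sum_congr rfl fun j _ => ?_
        rw [hstep]
lemma theta_normal
    (hΘ : ∀ (A : H₂ →L[ℂ] H₂) (i j : ℕ),
      ⟪ee i, (Θ A) (ee j)⟫_ℂ = if i = j then ⟪ee i, A (ee i)⟫_ℂ else 0)
    (h g : ℕ → H₂) (hsum : Summable fun n => ‖h n‖ * ‖g n‖) :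
    ∃ h' g' : ℕ → H₂, (Summable fun n => ‖h' n‖ * ‖g' n‖) ∧
      ∀ A : H₂ →L[ℂ] H₂, ∑' n, ⟪h n, (Θ A) (g n)⟫_ℂ = ∑' n, ⟪h' n, A (g' n)⟫_ℂ := by
  classical
  set q : ℕ ≃ ℕ × ℕ := (Denumerable.eqv (ℕ × ℕ)).symm with hq
  set F : ℕ × ℕ → ℝ := fun p => ‖(h p.1 : ∀ _ : ℕ, ℂ) p.2‖ * ‖(g p.1 : ∀ _ : ℕ, ℂ) p.2‖ with hFdef
  have hFnonneg : ∀ p, 0 ≤ F p := fun p => by positivity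
  have hFrow : ∀ n, Summable fun i => F (n, i) := fun n => (tsum_abs_coord_le (h n) (g n)).1
  have hFsum : Summable F := by
    refine (summable_prod_of_nonneg hFnonneg).2 ⟨hFrow, ?_⟩
    refine Summable.of_nonneg_of_le (fun n => tsum_nonneg fun i => hFnonneg _)
      (fun n => (tsum_abs_coord_le (h n) (g n)).2) hsum
  refine ⟨fun m => ((h (q m).1 : ∀ _ : ℕ, ℂ) (q m).2) • ee (q m).2,
    fun m => ((g (q m).1 : ∀ _ : ℕ, ℂ) (q m).2) • ee (q m).2, ?_, ?_⟩
  · have : (fun m => ‖((h (q m).1 : ∀ _ : ℕ, ℂ) (q m).2) • ee (q m).2‖ *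
        ‖((g (q m).1 : ∀ _ : ℕ, ℂ) (q m).2) • ee (q m).2‖) = fun m => F (q m) := by
      funext m
      rw [hFdef]
      simp [norm_smul, norm_ee]
    rw [this]
    exact (q.summable_iff (f := F)).2 hFsum
  · intro A
    set T : ℕ × ℕ → ℂ := fun p =>
      (starRingEnd ℂ) ((h p.1 : ∀ _ : ℕ, ℂ) p.2) *
        (⟪ee p.2, A (ee p.2)⟫_ℂ * (g p.1 : ∀ _ : ℕ, ℂ) p.2) with hT
    have hTbound : ∀ p, ‖T p‖ ≤ ‖A‖ * F p := by
      intro p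
      rw [hT, hFdef]
      simp only [norm_mul, RCLike.norm_conj]
      calc ‖(h p.1 : ∀ _ : ℕ, ℂ) p.2‖ * (‖⟪ee p.2, A (ee p.2)⟫_ℂ‖ * ‖(g p.1 : ∀ _ : ℕ, ℂ) p.2‖)
          = ‖⟪ee p.2, A (ee p.2)⟫_ℂ‖ * (‖(h p.1 : ∀ _ : ℕ, ℂ) p.2‖ * ‖(g p.1 : ∀ _ : ℕ, ℂ) p.2‖) := by
            ring
        _ ≤ ‖A‖ * (‖(h p.1 : ∀ _ : ℕ, ℂ) p.2‖ * ‖(g p.1 : ∀ _ : ℕ, ℂ) p.2‖) :=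
            mul_le_mul_of_nonneg_right (norm_diag_le A p.2) (by positivity)
    have hTsum : Summable T :=
      Summable.of_norm_bounded (hFsum.mul_left ‖A‖) hTbound
    have hTrow : ∀ n, Summable fun i => T (n, i) := by
      intro n
      refine Summable.of_norm_bounded ((hFrow n).mul_left ‖A‖) fun i => hTbound (n, i)
    calc ∑' n, ⟪h n, (Θ A) (g n)⟫_ℂ = ∑' n, ∑' i, T (n, i) := by
          refine tsum_congr fun n => ?_
          rw [inner_theta hΘ]
      _ = ∑' p, T p := (Summable.tsum_prod' hTsum hTrow).symm
      _ = ∑' m, T (q m) := (q.tsum_eq T).symm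
      _ = ∑' m, ⟪((h (q m).1 : ∀ _ : ℕ, ℂ) (q m).2) • ee (q m).2,
            A (((g (q m).1 : ∀ _ : ℕ, ℂ) (q m).2) • ee (q m).2)⟫_ℂ := by
          refine tsum_congr fun m => ?_
          rw [hT]
          simp only [map_smul, inner_smul_left, inner_smul_right]
          ring
variable {Sh : H₂ →L[ℂ] H₂}

lemma shift_adjoint_zero (hSh : ∀ n, Sh (ee n) = ee (n + 1)) : (star Sh) (ee 0) = 0 := by
  refine coord_eq fun m => ?_
  rw [← inner_ee_left]
  rw [ContinuousLinearMap.star_eq_adjoint, ContinuousLinearMap.adjoint_inner_right, hSh,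
    inner_ee_ee]
  simp

lemma shift_adjoint_succ (hSh : ∀ n, Sh (ee n) = ee (n + 1)) (j : ℕ) :
    (star Sh) (ee (j + 1)) = ee j := by
  refine coord_eq fun m => ?_
  rw [← inner_ee_left, ← inner_ee_left]
  rw [ContinuousLinearMap.star_eq_adjoint, ContinuousLinearMap.adjoint_inner_right, hSh,
    inner_ee_ee, inner_ee_ee]
  simp

lemma shift_star_shift (hSh : ∀ n, Sh (ee n) = ee (n + 1)) : star Sh * Sh = 1 := by
  refine clm_ext_entries fun i j => ?_
  rw [ContinuousLinearMap.mul_apply, ContinuousLinearMap.star_eq_adjoint,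
    ContinuousLinearMap.adjoint_inner_right, hSh, hSh, ContinuousLinearMap.one_apply,
    inner_ee_ee, inner_ee_ee]
  simp

lemma theta_phi_comm
    (hΘ : ∀ (A : H₂ →L[ℂ] H₂) (i j : ℕ),
      ⟪ee i, (Θ A) (ee j)⟫_ℂ = if i = j then ⟪ee i, A (ee i)⟫_ℂ else 0)
    (hSh : ∀ n, Sh (ee n) = ee (n + 1)) (A : H₂ →L[ℂ] H₂) :
    Θ (Sh * A * star Sh) = Sh * (Θ A) * star Sh := by
  have hadj : ∀ (x y : H₂) (B : H₂ →L[ℂ] H₂), ⟪x, Sh y⟫_ℂ = ⟪(star Sh) x, y⟫_ℂ := by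
    intro x y B
    rw [ContinuousLinearMap.star_eq_adjoint, ContinuousLinearMap.adjoint_inner_left]
  refine clm_ext_entries fun i j => ?_
  rw [hΘ]
  have hR : ⟪ee i, (Sh * (Θ A) * star Sh) (ee j)⟫_ℂ
      = ⟪(star Sh) (ee i), (Θ A) ((star Sh) (ee j))⟫_ℂ := by
    rw [ContinuousLinearMap.mul_apply, ContinuousLinearMap.mul_apply, hadj _ _ 1]
  have hL : ∀ k : ℕ, ⟪ee k, (Sh * A * star Sh) (ee k)⟫_ℂ
      = ⟪(star Sh) (ee k), A ((star Sh) (ee k))⟫_ℂ := by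
    intro k
    rw [ContinuousLinearMap.mul_apply, ContinuousLinearMap.mul_apply, hadj _ _ 1]
  rw [hR]
  rcases i with _ | m
  · rcases j with _ | n
    · rw [if_pos rfl, hL, shift_adjoint_zero hSh]
      simp
    · rw [if_neg (by omega), shift_adjoint_zero hSh]
      simp
  · rcases j with _ | n
    · rw [if_neg (by omega), shift_adjoint_zero hSh]
      simp
    · rw [shift_adjoint_succ hSh, shift_adjoint_succ hSh, hΘ]
      by_cases h : m = n
      · subst h
        rw [if_pos rfl, if_pos rfl, hL, shift_adjoint_succ hSh]
      · rw [if_neg (by omega), if_neg h]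
end DiagAux

end DiagAux  -- close the noncomputable section named DiagAux

open DiagAux

set_option maxHeartbeats 1000000 in
theorem diagonal_and_shift_do_not_strongly_commute
    (e : ℕ → H₂) (he : ∀ n, e n = lp.single 2 n (1 : ℂ))
    (Sh : H₂ →L[ℂ] H₂) (hSh : ∀ n, Sh (e n) = e (n + 1))
    (Θ : (H₂ →L[ℂ] H₂) →ₗ[ℂ] (H₂ →L[ℂ] H₂))
    (hΘ : ∀ (A : H₂ →L[ℂ] H₂) (i j : ℕ),
      ⟪e i, (Θ A) (e j)⟫_ℂ = if i = j then ⟪e i, A (e i)⟫_ℂ else 0)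
    (Φ : (H₂ →L[ℂ] H₂) → (H₂ →L[ℂ] H₂)) (hΦ : ∀ A, Φ A = Sh * A * star Sh) :
    -- `Θ` is a unital CP map:
    Θ 1 = 1 ∧ (∀ A, ‖Θ A‖ ≤ ‖A‖) ∧ IsNormalMap (fun A => Θ A) ∧
      IsCompletelyPositive (fun A => Θ A) ∧
    -- `Φ` is a normal `*`-endomorphism:
    (∀ A B, Φ (A + B) = Φ A + Φ B) ∧ (∀ (c : ℂ) A, Φ (c • A) = c • Φ A) ∧
      (∀ A B, Φ (A * B) = Φ A * Φ B) ∧ (∀ A, Φ (star A) = star (Φ A)) ∧ IsNormalMap Φ ∧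
    -- they commute:
    (∀ A, Θ (Φ A) = Φ (Θ A)) ∧
    -- but not strongly:
    ¬ StronglyCommuteOn (Set.univ : Set (H₂ →L[ℂ] H₂)) (fun A => Θ A) Φ := by
  have hee : ∀ n, e n = ee n := fun n => he n
  have hΘ' : ∀ (A : H₂ →L[ℂ] H₂) (i j : ℕ),
      ⟪ee i, (Θ A) (ee j)⟫_ℂ = if i = j then ⟪ee i, A (ee i)⟫_ℂ else 0 := by
    intro A i j
    have := hΘ A i j
    simpa only [hee] using this
  have hSh' : ∀ n, Sh (ee n) = ee (n + 1) := by
    intro n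
    have := hSh n
    simpa only [hee] using this
  have hSS : star Sh * Sh = 1 := shift_star_shift hSh'
  have hΦm : ∀ X Y : H₂ →L[ℂ] H₂,
      (Sh * X * star Sh) * (Sh * Y * star Sh) = Sh * (X * Y) * star Sh := by
    intro X Y
    have h1 : (Sh * X * star Sh) * (Sh * Y * star Sh)
        = Sh * X * (star Sh * Sh) * (Y * star Sh) := by noncomm_ring
    rw [h1, hSS, mul_one]
    noncomm_ring
  have hΦs : ∀ X : H₂ →L[ℂ] H₂, star (Sh * X * star Sh) = Sh * star X * star Sh := by
    intro X
    simp [star_mul, mul_assoc]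
  have hstar_inner : ∀ (C : H₂ →L[ℂ] H₂) (x y : H₂), ⟪C x, y⟫_ℂ = ⟪x, (star C) y⟫_ℂ := by
    intro C x y
    rw [ContinuousLinearMap.star_eq_adjoint, ContinuousLinearMap.adjoint_inner_right]
  refine ⟨theta_one hΘ', theta_norm_le hΘ', ?_, ?_, ?_, ?_, ?_, ?_, ?_, ?_, ?_⟩
  · -- normal Θ
    intro h g hs
    exact theta_normal hΘ' h g hs
  · -- CP
    intro n a v
    exact theta_cp hΘ' n a v
  · -- additive
    intro A B
    simp [hΦ, mul_add, add_mul]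
  · -- smul
    intro c A
    simp [hΦ]
  · -- multiplicative
    intro A B
    rw [hΦ, hΦ, hΦ, hΦm]
  · -- star
    intro A
    rw [hΦ, hΦ, hΦs]
  · -- normal Φ
    intro h g hs
    refine ⟨fun n => (star Sh) (h n), fun n => (star Sh) (g n), ?_, ?_⟩
    · refine Summable.of_nonneg_of_le (fun n => by positivity)
        (fun n => ?_) (hs.mul_left (‖star Sh‖ * ‖star Sh‖))
      calc ‖(star Sh) (h n)‖ * ‖(star Sh) (g n)‖
          ≤ (‖star Sh‖ * ‖h n‖) * (‖star Sh‖ * ‖g n‖) :=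
            mul_le_mul ((star Sh).le_opNorm _) ((star Sh).le_opNorm _) (norm_nonneg _)
              (by positivity)
        _ = ‖star Sh‖ * ‖star Sh‖ * (‖h n‖ * ‖g n‖) := by ring
    · intro a
      refine tsum_congr fun n => ?_
      rw [hΦ, ContinuousLinearMap.mul_apply, ContinuousLinearMap.mul_apply,
        ContinuousLinearMap.star_eq_adjoint, ContinuousLinearMap.adjoint_inner_left]
  · -- commute
    intro A
    rw [hΦ, hΦ]
    exact theta_phi_comm hΘ' hSh' A
  · -- not strongly commute
    rintro ⟨W₁, i1, i2, i3, W₂, j1, j2, j3, ι₁, ι₂, u, L, Rop,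
      hι₁, hι₂, hd₁, hd₂, hu1, hL, huL, hR, huR⟩
    set v : W₁ := ι₁ 1 Sh (ee 0) with hv
    have htriv : ∀ X : H₂ →L[ℂ] H₂, X ∈ (Set.univ : Set (H₂ →L[ℂ] H₂)) := fun X => Set.mem_univ X
    -- ⟪v, v⟫ = 1
    have hv_norm : ⟪v, v⟫_ℂ = 1 := by
      rw [hv, hι₁ 1 (htriv _) Sh (htriv _) 1 (htriv _) Sh (htriv _) (ee 0) (ee 0)]
      beta_reduce
      have harg : star Sh * Φ (star 1 * 1) * Sh = 1 := by
        rw [hΦ]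
        have h1 : star Sh * (Sh * (star 1 * 1) * star Sh) * Sh
            = (star Sh * Sh) * (star 1 * 1) * (star Sh * Sh) := by noncomm_ring
        rw [h1, hSS]
        simp
      rw [harg, theta_one hΘ', ContinuousLinearMap.one_apply, inner_ee_ee]
      simp
    -- v ⊥ ι₁ a 1 h'
    have hv_perp : ∀ (a : H₂ →L[ℂ] H₂) (h' : H₂), ⟪v, ι₁ a 1 h'⟫_ℂ = 0 := by
      intro a h'
      rw [hv, hι₁ 1 (htriv _) Sh (htriv _) a (htriv _) 1 (htriv _) (ee 0) h']
      beta_reduce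
      have harg : star Sh * Φ (star 1 * a) * 1 = a * star Sh := by
        rw [hΦ]
        have h1 : star Sh * (Sh * (star 1 * a) * star Sh) * 1
            = (star Sh * Sh) * (a * star Sh) := by
          simp only [star_one, one_mul, mul_one]
          noncomm_ring
        rw [h1, hSS, one_mul]
      rw [harg]
      rw [inner_ee_left, theta_coord hΘ']
      have h0 : (a * star Sh) (ee 0) = 0 := by
        rw [ContinuousLinearMap.mul_apply, shift_adjoint_zero hSh']
        simp
      rw [h0]
      simp
    -- ι₂ a b h = ι₂ a 1 (Φ b h)
    have hred : ∀ (a b : H₂ →L[ℂ] H₂) (h : H₂), ι₂ a b h = ι₂ a 1 ((Φ b) h) := by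
      intro a b h
      have t11 : ⟪ι₂ a b h, ι₂ a b h⟫_ℂ = ⟪h, (Φ (star b * Θ (star a * a) * b)) h⟫_ℂ :=
        hι₂ a (htriv _) b (htriv _) a (htriv _) b (htriv _) h h
      have t12 : ⟪ι₂ a b h, ι₂ a 1 ((Φ b) h)⟫_ℂ
          = ⟪h, (Φ (star b * Θ (star a * a) * b)) h⟫_ℂ := by
        rw [hι₂ a (htriv _) b (htriv _) a (htriv _) 1 (htriv _) h ((Φ b) h)]
        beta_reduce
        simp only [mul_one, hΦ]
        rw [← ContinuousLinearMap.mul_apply, hΦm]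
      have t21 : ⟪ι₂ a 1 ((Φ b) h), ι₂ a b h⟫_ℂ
          = ⟪h, (Φ (star b * Θ (star a * a) * b)) h⟫_ℂ := by
        rw [hι₂ a (htriv _) 1 (htriv _) a (htriv _) b (htriv _) ((Φ b) h) h]
        beta_reduce
        rw [star_one, one_mul, hstar_inner (Φ b) h]
        simp only [hΦ, hΦs]
        rw [← ContinuousLinearMap.mul_apply, hΦm]
        exact congrArg (fun X : H₂ →L[ℂ] H₂ => ⟪h, X h⟫_ℂ) (by noncomm_ring)
      have t22 : ⟪ι₂ a 1 ((Φ b) h), ι₂ a 1 ((Φ b) h)⟫_ℂ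
          = ⟪h, (Φ (star b * Θ (star a * a) * b)) h⟫_ℂ := by
        rw [hι₂ a (htriv _) 1 (htriv _) a (htriv _) 1 (htriv _) ((Φ b) h) ((Φ b) h)]
        beta_reduce
        rw [star_one, one_mul, mul_one, hstar_inner (Φ b) h]
        simp only [hΦ, hΦs]
        rw [← ContinuousLinearMap.mul_apply, hΦm, ← ContinuousLinearMap.mul_apply, hΦm]
      have hz : ⟪ι₂ a b h - ι₂ a 1 ((Φ b) h), ι₂ a b h - ι₂ a 1 ((Φ b) h)⟫_ℂ = 0 := by
        rw [inner_sub_left, inner_sub_right, inner_sub_right, t11, t12, t21, t22]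
        ring
      have := inner_self_eq_zero.mp hz
      exact sub_eq_zero.mp this
    set w : W₂ := u v with hw
    have hw_perp : ∀ (a b : H₂ →L[ℂ] H₂) (h : H₂), ⟪w, ι₂ a b h⟫_ℂ = 0 := by
      intro a b h
      rw [hred a b h, ← hu1 a (htriv _) ((Φ b) h), hw, LinearIsometryEquiv.inner_map_map]
      exact hv_perp a _
    have hw_span : ∀ z ∈ Submodule.span ℂ
        {z : W₂ | ∃ a ∈ (Set.univ : Set (H₂ →L[ℂ] H₂)), ∃ b ∈ (Set.univ : Set (H₂ →L[ℂ] H₂)),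
          ∃ h : H₂, z = ι₂ a b h}, ⟪w, z⟫_ℂ = 0 := by
      intro z hz
      induction hz using Submodule.span_induction with
      | mem z hzmem =>
        obtain ⟨a, -, b, -, h, rfl⟩ := hzmem
        exact hw_perp a b h
      | zero => simp
      | add x y _ _ hx hy => rw [inner_add_right, hx, hy, add_zero]
      | smul c x _ hx => rw [inner_smul_right, hx, mul_zero]
    have hall : ∀ z : W₂, ⟪w, z⟫_ℂ = 0 := by
      have hcont : Continuous fun z : W₂ => ⟪w, z⟫_ℂ := (innerSL ℂ w).continuous
      have heq : (fun z : W₂ => ⟪w, z⟫_ℂ) = fun _ => (0 : ℂ) :=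
        Continuous.ext_on hd₂ hcont continuous_const hw_span
      intro z
      exact congrFun heq z
    have h1 : ⟪w, w⟫_ℂ = 0 := hall w
    have h2 : ⟪w, w⟫_ℂ = 1 := by
      rw [hw, LinearIsometryEquiv.inner_map_map]
      exact hv_norm
    rw [h1] at h2
    exact zero_ne_one h2


end DiagAuxSection
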